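/- Let G be a finitely generated infinite group such that every proper quotient of G belongs to 𝓜𝓕. Then G admits a proper prodense subgroup if and only if G admits a maximal subgroup of infinite index. -/
import Mathlib


open Equiv

namespace PaperDefs
/-! ### Group-theoretic notions -/

/-- `H` is a normal subgroup of `K` (both being subgroups of an ambient group). -/
def NormalIn {P : Type*} [Group P] (H K : Subgroup P) : Prop :=
  H ≤ K ∧ ∀ k ∈ K, ∀ h ∈ H, k * h * k⁻¹ ∈ H

/-- `H` is `k`-subnormal in `G`: there is a chain `H = c k ⊴ ⋯ ⊴ c 0 = G`. -/
def SubnormalIn {P : Type*} [Group P] (H G : Subgroup P) (k : ℕ) : Prop :=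
  ∃ c : ℕ → Subgroup P, c 0 = G ∧ c k = H ∧ ∀ i < k, NormalIn (c (i + 1)) (c i)

/-- The iterated derived subgroup `H⁽ᵏ⁾` of a subgroup `H` of an ambient group. -/
def derivedIter {P : Type*} [Group P] (H : Subgroup P) : ℕ → Subgroup P
  | 0 => H
  | k + 1 => ⁅derivedIter H k, derivedIter H k⁆

/-- The class `𝓜𝓕` of groups all of whose maximal subgroups have finite index. -/
def MF (Γ : Type*) [Group Γ] : Prop :=
  ∀ M : Subgroup Γ, IsCoatom M → M.index ≠ 0

/-- Every proper quotient of `Γ` belongs to `𝓜𝓕`. -/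
def QuotientsMF (Γ : Type*) [Group Γ] : Prop :=
  ∀ (N : Subgroup Γ) [N.Normal], N ≠ ⊥ → MF (Γ ⧸ N)

/-- `H` is a prodense subgroup of `Γ`: `HN = Γ` for every nontrivial normal `N ⊴ Γ`. -/
def Prodense {Γ : Type*} [Group Γ] (H : Subgroup Γ) : Prop :=
  ∀ N : Subgroup Γ, N.Normal → N ≠ ⊥ → H ⊔ N = ⊤

/-- `H` is a prodense subgroup of `G`, both being subgroups of an ambient group:
`H ≤ G` and `HN = G` for every nontrivial subgroup `N ≤ G` normal in `G`. -/
def ProdenseIn {P : Type*} [Group P] (H G : Subgroup P) : Prop :=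
  H ≤ G ∧ ∀ N : Subgroup P, N ≤ G → NormalIn N G → N ≠ ⊥ → H ⊔ N = G

/-- `M` is a maximal subgroup of `G` (both subgroups of an ambient group). -/
def MaximalIn {P : Type*} [Group P] (M G : Subgroup P) : Prop :=
  M < G ∧ ∀ K : Subgroup P, M < K → K ≤ G → K = G


/-- In a finitely generated group, every proper subgroup lies in a maximal one. -/
lemma exists_coatom_le (G : Type) [Group G] (hfg : Group.FG G)
    {H : Subgroup G} (hH : H ≠ ⊤) : ∃ M : Subgroup G, H ≤ M ∧ IsCoatom M := by
  obtain ⟨S, hS⟩ := hfg.1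
  obtain ⟨M, hHM, hMs, hMmax⟩ := zorn_le_nonempty₀ {K : Subgroup G | K ≠ ⊤}
    (fun c hcs hc y hy => by
      refine ⟨sSup c, ?_, fun z hz => le_sSup hz⟩
      intro htop
      -- all generators lie in the sSup, hence in a single element of the chain
      have hd : DirectedOn (· ≤ ·) c := hc.directedOn
      have hmem : ∀ s ∈ (S : Set G), ∃ K ∈ c, s ∈ K := by
        intro s _
        have : s ∈ sSup c := htop ▸ Subgroup.mem_top s
        exact (Subgroup.mem_sSup_of_directedOn ⟨y, hy⟩ hd).1 this
      -- find a single K containing all of S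
      have key : ∀ t : Finset G, (∀ x ∈ t, ∃ K ∈ c, x ∈ K) → ∃ K ∈ c, (t : Set G) ⊆ K := by
        classical
        intro t
        refine t.induction_on ?_ ?_
        · exact fun _ => ⟨y, hy, by simp⟩
        · rintro a s _ ih hall
          obtain ⟨K, hKc, hK⟩ := ih (fun x hx => hall x (Finset.mem_insert_of_mem hx))
          obtain ⟨K', hK'c, haK'⟩ := hall a (Finset.mem_insert_self a s)
          obtain ⟨L, hLc, hKL, hK'L⟩ := hd K hKc K' hK'c
          exact ⟨L, hLc, by
            intro x hx
            rcases Finset.mem_insert.1 hx with rfl | hx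
            · exact hK'L haK'
            · exact hKL (hK hx)⟩
      obtain ⟨K, hKc, hSK⟩ := key S hmem
      have : K = ⊤ := by
        rw [eq_top_iff, ← hS]
        exact (Subgroup.closure_le K).2 hSK
      exact hcs hKc this)
    H hH
  refine ⟨M, hHM, hMs, fun K hMK => ?_⟩
  by_contra hK
  exact hMK.ne (le_antisymm hMK.le (hMmax hK hMK.le))

/-- A finitely generated infinite group all of whose proper
quotients lie in `𝓜𝓕` admits a proper prodense subgroup if and only if it admits
a maximal subgroup of infinite index. -/
theorem prodense_iff_maximal_of_infinite_index
    (G : Type) [Group G] (hfg : Group.FG G) (hinf : Infinite G)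
    (hQ : QuotientsMF G) :
    (∃ H : Subgroup G, H ≠ ⊤ ∧ Prodense H) ↔
      ∃ M : Subgroup G, IsCoatom M ∧ M.index = 0 := by
  constructor
  · rintro ⟨H, hHne, hHpd⟩
    obtain ⟨M, hHM, hM⟩ := exists_coatom_le G hfg hHne
    refine ⟨M, hM, ?_⟩
    by_contra hMidx
    -- M has finite index; its normal core is nontrivial normal, contradicting prodensity
    haveI : M.FiniteIndex := ⟨hMidx⟩
    have hcore_ne : M.normalCore ≠ ⊥ := by
      intro hb
      have : M.normalCore.index = Nat.card G := by rw [hb, Subgroup.index_bot]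
      have hz : Nat.card G = 0 := Nat.card_eq_zero_of_infinite
      exact Subgroup.FiniteIndex.index_ne_zero (H := M.normalCore) (this.trans hz)
    have := hHpd M.normalCore (Subgroup.normalCore_normal M) hcore_ne
    have hMtop : M ⊔ M.normalCore = ⊤ := by
      rw [eq_top_iff, ← this]
      exact sup_le_sup hHM le_rfl
    rw [sup_of_le_left (Subgroup.normalCore_le M)] at hMtop
    exact hM.1 hMtop
  · rintro ⟨M, hM, hMidx⟩
    refine ⟨M, hM.1, fun N hN hNne => ?_⟩
    by_cases hNM : N ≤ M
    · exfalso
      haveI := hN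
      set f := QuotientGroup.mk' N with hf
      have hker : f.ker = N := QuotientGroup.ker_mk' N
      have hsurj : Function.Surjective f := QuotientGroup.mk'_surjective N
      have hkerM : f.ker ≤ M := by rw [hker]; exact hNM
      have hcomap : (M.map f).comap f = M := by
        rw [Subgroup.comap_map_eq, hker, sup_of_le_left hNM]
      have hcoatom : IsCoatom (M.map f) := by
        constructor
        · intro htop
          have : M = ⊤ := by
            rw [← hcomap, htop, Subgroup.comap_top]
          exact hM.1 this
        · intro K hK
          have h1 : M < K.comap f := by
            rw [← hcomap]
            refine lt_of_le_of_ne (Subgroup.comap_mono hK.le) ?_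
            intro he
            have := congrArg (Subgroup.map f) he
            rw [Subgroup.map_comap_eq_self_of_surjective hsurj,
              Subgroup.map_comap_eq_self_of_surjective hsurj] at this
            exact hK.ne this
          have h2 := hM.2 _ h1
          have := congrArg (Subgroup.map f) h2
          rwa [Subgroup.map_comap_eq_self_of_surjective hsurj,
            Subgroup.map_top_of_surjective f hsurj] at this
      have hidx : (M.map f).index = 0 := by
        rw [M.index_map_eq hsurj hkerM, hMidx]
      exact hQ N hNne (M.map f) hcoatom hidx
    · have : M < M ⊔ N := by
        refine lt_of_le_of_ne le_sup_left ?_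
        intro he
        exact hNM (he ▸ le_sup_right)
      exact hM.2 _ this


end PaperDefs
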